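/- Let a ≥ 1 be a real number. The function p ↦ (a - 1 - a p + p^a)/(1 - p - p^a + p^{a+1}) is decreasing on (0,1). -/

import Mathlib

private lemma sinh_mul_le (a : ℝ) (ha : 1 ≤ a) {t : ℝ} (ht : 0 ≤ t) :
    a * Real.sinh t ≤ Real.sinh (a * t) := by
  have hd : ∀ x : ℝ, HasDerivAt (fun y => Real.sinh (a * y) - a * Real.sinh y)
      (Real.cosh (a * x) * a - a * Real.cosh x) x := by
    intro x
    have h1 : HasDerivAt (fun y : ℝ => Real.sinh (a * y)) (Real.cosh (a * x) * a) x := by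
      simpa [Function.comp_def] using (Real.hasDerivAt_sinh (a * x)).comp x ((hasDerivAt_id x).const_mul a)
    exact h1.sub ((Real.hasDerivAt_sinh x).const_mul a)
  have key : MonotoneOn (fun t => Real.sinh (a * t) - a * Real.sinh t) (Set.Ici 0) := by
    apply monotoneOn_of_deriv_nonneg (convex_Ici 0)
    · exact (Real.continuous_sinh.comp (continuous_const.mul continuous_id)).sub
        (continuous_const.mul Real.continuous_sinh) |>.continuousOn
    · intro x _
      exact (hd x).differentiableAt.differentiableWithinAt
    · intro x hx
      rw [interior_Ici, Set.mem_Ioi] at hx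
      rw [(hd x).deriv]
      have hcc : Real.cosh x ≤ Real.cosh (a * x) := by
        rw [Real.cosh_le_cosh]
        rw [abs_of_pos hx, abs_of_pos (by nlinarith : (0:ℝ) < a * x)]
        nlinarith
      nlinarith
  have h0 := key (Set.mem_Ici.2 le_rfl) (Set.mem_Ici.2 ht) ht
  simp only [mul_zero, Real.sinh_zero, sub_zero] at h0
  linarith

private lemma key2 (a : ℝ) (ha : 1 ≤ a) {p : ℝ} (hp0 : 0 < p) (hp1 : p < 1) :
    a * p ^ ((a - 1) / 2) * (1 - p) ≤ 1 - p ^ a := by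
  set L := Real.log p with hL
  set t := -L / 2 with htdef
  have hLneg : L < 0 := Real.log_neg hp0 hp1
  have ht : 0 ≤ t := by rw [htdef]; linarith
  set X := Real.exp (L / 2) with hXdef
  set Y := Real.exp (a * L / 2) with hYdef
  have hX : 0 < X := Real.exp_pos _
  have hY : 0 < Y := Real.exp_pos _
  have hXY : a * (X⁻¹ - X) ≤ Y⁻¹ - Y := by
    have h := sinh_mul_le a ha ht
    rw [Real.sinh_eq, Real.sinh_eq] at h
    have ea : Real.exp t = X⁻¹ := by rw [hXdef, ← Real.exp_neg]; congr 1; rw [htdef]; ring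
    have eb : Real.exp (-t) = X := by rw [hXdef]; congr 1; rw [htdef]; ring
    have ec : Real.exp (a * t) = Y⁻¹ := by
      rw [hYdef, ← Real.exp_neg]; congr 1; rw [htdef]; ring
    have ed : Real.exp (-(a * t)) = Y := by rw [hYdef]; congr 1; rw [htdef]; ring
    rw [ea, eb, ec, ed] at h
    linarith
  have epp : X * X = p := by
    rw [hXdef, ← Real.exp_add, show L / 2 + L / 2 = L from by ring, hL, Real.exp_log hp0]
  have epa : Y * Y = p ^ a := by
    rw [hYdef, ← Real.exp_add, show a * L / 2 + a * L / 2 = L * a from by ring, hL,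
      Real.rpow_def_of_pos hp0]
  have epow : p ^ ((a - 1) / 2) = Y / X := by
    rw [Real.rpow_def_of_pos hp0, ← hL, hYdef, hXdef, ← Real.exp_sub]
    congr 1; ring
  rw [epow, ← epa, ← epp]
  have h2 := mul_le_mul_of_nonneg_left hXY hY.le
  have lhs_eq : a * (Y / X) * (1 - X * X) = Y * (a * (X⁻¹ - X)) := by
    field_simp
  have rhs_eq : Y * (Y⁻¹ - Y) = 1 - Y * Y := by field_simp
  linarith [lhs_eq ▸ (rhs_eq ▸ h2)]

private lemma key3 (a : ℝ) (ha : 1 ≤ a) {p : ℝ} (hp0 : 0 < p) (hp1 : p < 1) :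
    a ^ 2 * p ^ (a - 1) * (1 - p) ^ 2 ≤ (1 - p ^ a) ^ 2 := by
  have h := key2 a ha hp0 hp1
  have h1 : 0 ≤ a * p ^ ((a - 1) / 2) * (1 - p) := by
    apply mul_nonneg (mul_nonneg (by linarith) (Real.rpow_nonneg hp0.le _))
    linarith
  have h2 : (a * p ^ ((a - 1) / 2) * (1 - p)) ^ 2 ≤ (1 - p ^ a) ^ 2 :=
    pow_le_pow_left₀ h1 h 2
  have e : (p ^ ((a - 1) / 2)) ^ 2 = p ^ (a - 1) := by
    rw [sq, ← Real.rpow_add hp0]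
    congr 1; ring
  calc a ^ 2 * p ^ (a - 1) * (1 - p) ^ 2
      = (a * p ^ ((a - 1) / 2) * (1 - p)) ^ 2 := by rw [mul_pow, mul_pow, e]
    _ ≤ (1 - p ^ a) ^ 2 := h2

theorem pR_ratio_decreasing (a : ℝ) (ha : 1 ≤ a) :
    AntitoneOn (fun p : ℝ => (a - 1 - a * p + p ^ a) / (1 - p - p ^ a + p ^ (a + 1)))
      (Set.Ioo (0 : ℝ) 1) := by
  have hDpos : ∀ p ∈ Set.Ioo (0:ℝ) 1, 0 < 1 - p - p ^ a + p ^ (a + 1) := by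
    intro p hp
    obtain ⟨hp0, hp1⟩ := hp
    have hpa : p ^ a < 1 := Real.rpow_lt_one hp0.le hp1 (by linarith)
    have e : p ^ (a + 1) = p ^ a * p := Real.rpow_add_one hp0.ne' a
    have : 1 - p - p ^ a + p ^ (a + 1) = (1 - p) * (1 - p ^ a) := by rw [e]; ring
    rw [this]
    exact mul_pos (by linarith) (by linarith)
  have hder : ∀ p ∈ Set.Ioo (0:ℝ) 1,
      HasDerivAt (fun q : ℝ => (a - 1 - a * q + q ^ a) / (1 - q - q ^ a + q ^ (a + 1)))
        (((0 - a * 1 + a * p ^ (a - 1)) * (1 - p - p ^ a + p ^ (a + 1)) -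
          (a - 1 - a * p + p ^ a) * ((0 - 1 - a * p ^ (a - 1)) + (a + 1) * p ^ (a + 1 - 1))) /
          (1 - p - p ^ a + p ^ (a + 1)) ^ 2) p := by
    intro p hp
    have hne : p ≠ 0 := hp.1.ne'
    have hN : HasDerivAt (fun q : ℝ => a - 1 - a * q + q ^ a)
        (0 - a * 1 + a * p ^ (a - 1)) p :=
      (((hasDerivAt_const p (a - 1)).sub ((hasDerivAt_id p).const_mul a)).add
        (Real.hasDerivAt_rpow_const (Or.inl hne)))
    have hD : HasDerivAt (fun q : ℝ => 1 - q - q ^ a + q ^ (a + 1))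
        ((0 - 1 - a * p ^ (a - 1)) + (a + 1) * p ^ (a + 1 - 1)) p :=
      ((((hasDerivAt_const p 1).sub (hasDerivAt_id p)).sub
        (Real.hasDerivAt_rpow_const (Or.inl hne))).add
        (Real.hasDerivAt_rpow_const (Or.inl hne)))
    exact hN.div hD (hDpos p hp).ne'
  apply antitoneOn_of_deriv_nonpos (convex_Ioo 0 1)
  · intro p hp
    exact ((hder p hp).differentiableAt).continuousAt.continuousWithinAt
  · rw [interior_Ioo]
    intro p hp
    exact ((hder p hp).differentiableAt).differentiableWithinAt
  · rw [interior_Ioo]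
    intro p hp
    obtain ⟨hp0, hp1⟩ := hp
    rw [(hder p ⟨hp0, hp1⟩).deriv]
    apply div_nonpos_of_nonpos_of_nonneg _ (sq_nonneg _)
    have e1 : p ^ a = p ^ (a - 1) * p := by
      rw [← Real.rpow_add_one hp0.ne']; norm_num
    have e2 : p ^ (a + 1) = p ^ (a - 1) * p * p := by
      rw [← Real.rpow_add_one hp0.ne', ← Real.rpow_add_one hp0.ne']; norm_num
    have e3 : a + 1 - 1 = a := by ring
    rw [e3, e1, e2]
    set u := p ^ (a - 1) with hu
    have h3 := key3 a ha hp0 hp1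
    rw [e1] at h3
    nlinarith [h3]
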